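/- Let 1 ≤ p ≤ n and m ≥ n − p. Let A be a real p×n matrix and C a real m×n matrix such that C has rank n − p and ker A ∩ ker C = {0} (equivalently, the (p+m)×n matrix obtained by stacking A over C has rank n). Let Q be a real symmetric positive definite p×p matrix and R a real symmetric positive definite m×m matrix. Then the n×n matrix P := Aᵀ·Q·A + Cᵀ·R·C is symmetric positive definite and satisfies A·P⁻¹·Aᵀ = Q⁻¹. -/

import Mathlib

open Matrix

/-- If `A` is `p×n`, `C` is `m×n` with rank `n − p`, their kernels intersect trivially
(i.e. the stacked matrix has rank `n`), and `Q`, `R` are symmetric positive definite, then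
`P := Aᵀ·Q·A + Cᵀ·R·C` is symmetric positive definite and `A·P⁻¹·Aᵀ = Q⁻¹`. -/
theorem stmt_1 {n p m : ℕ} (hp1 : 1 ≤ p) (hpn : p ≤ n) (hm : n - p ≤ m)
    (A : Matrix (Fin p) (Fin n) ℝ) (C : Matrix (Fin m) (Fin n) ℝ)
    (hC : C.rank = n - p)
    (hker : ∀ v : Fin n → ℝ, A.mulVec v = 0 → C.mulVec v = 0 → v = 0)
    (Q : Matrix (Fin p) (Fin p) ℝ) (hQsym : Q.IsSymm) (hQ : Q.PosDef)
    (R : Matrix (Fin m) (Fin m) ℝ) (hRsym : R.IsSymm) (hR : R.PosDef) :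
    (Aᵀ * Q * A + Cᵀ * R * C).IsSymm ∧ (Aᵀ * Q * A + Cᵀ * R * C).PosDef ∧
      A * (Aᵀ * Q * A + Cᵀ * R * C)⁻¹ * Aᵀ = Q⁻¹ := by
  set P := Aᵀ * Q * A + Cᵀ * R * C with hP
  have hsym : P.IsSymm := by
    unfold P
    rw [Matrix.IsSymm, transpose_add, transpose_mul, transpose_mul, transpose_mul, transpose_mul,
      transpose_transpose, transpose_transpose, hQsym.eq, hRsym.eq, ← Matrix.mul_assoc, ← Matrix.mul_assoc]
  -- quadratic form computation
  have hquad : ∀ v : Fin n → ℝ, v ⬝ᵥ (P *ᵥ v)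
      = (A *ᵥ v) ⬝ᵥ (Q *ᵥ (A *ᵥ v)) + (C *ᵥ v) ⬝ᵥ (R *ᵥ (C *ᵥ v)) := by
    intro v
    unfold P
    rw [add_mulVec, dotProduct_add, ← mulVec_mulVec, ← mulVec_mulVec, ← mulVec_mulVec,
      ← mulVec_mulVec, dotProduct_mulVec v Aᵀ, vecMul_transpose, dotProduct_mulVec v Cᵀ,
      vecMul_transpose]
  have hposdef : P.PosDef := by
    rw [Matrix.posDef_iff_dotProduct_mulVec]
    constructor
    · rw [Matrix.IsHermitian]
      simpa using hsym.eq
    · intro v hv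
      have h := hquad v
      simp only [star_trivial]
      rw [h]
      by_cases hAv : A *ᵥ v = 0
      · have hCv : C *ᵥ v ≠ 0 := fun hc => hv (hker v hAv hc)
        have h1 : (A *ᵥ v) ⬝ᵥ (Q *ᵥ (A *ᵥ v)) = 0 := by rw [hAv]; simp
        have h2 := hR.dotProduct_mulVec_pos hCv
        simp only [star_trivial] at h2
        linarith
      · have h1 := hQ.dotProduct_mulVec_pos hAv
        simp only [star_trivial] at h1
        have h2 := hR.posSemidef.dotProduct_mulVec_nonneg (C *ᵥ v)
        simp only [star_trivial, RCLike.re_to_real] at h2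
        linarith
  refine ⟨hsym, hposdef, ?_⟩
  classical
  have hPunit : IsUnit P := hposdef.isUnit
  have hPdet : IsUnit P.det := (Matrix.isUnit_iff_isUnit_det _).1 hPunit
  have hPP : P * P⁻¹ = 1 := Matrix.mul_nonsing_inv _ hPdet
  have hPP' : P⁻¹ * P = 1 := Matrix.nonsing_inv_mul _ hPdet
  have hQdet : IsUnit Q.det := (Matrix.isUnit_iff_isUnit_det _).1 hQ.isUnit
  have hQQ : Q * Q⁻¹ = 1 := Matrix.mul_nonsing_inv _ hQdet
  set kA := LinearMap.ker A.mulVecLin with hkAdef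
  set kC := LinearMap.ker C.mulVecLin with hkCdef
  have hdisj : kA ⊓ kC = ⊥ := by
    rw [eq_bot_iff]
    rintro v hv
    have h1 : v ∈ kA := hv.1
    have h2 : v ∈ kC := hv.2
    rw [LinearMap.mem_ker, Matrix.mulVecLin_apply] at h1 h2
    exact hker v h1 h2
  have hfinfun : Module.finrank ℝ (Fin n → ℝ) = n := by simp
  have hrnC : C.rank + Module.finrank ℝ kC = n := by
    have := LinearMap.finrank_range_add_finrank_ker C.mulVecLin
    rw [hfinfun] at this
    exact this
  have hkC : Module.finrank ℝ kC = p := by omega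
  have hsupinf := Submodule.finrank_sup_add_finrank_inf_eq kA kC
  rw [hdisj] at hsupinf
  simp only [finrank_bot, add_zero] at hsupinf
  have hsuple : Module.finrank ℝ ↥(kA ⊔ kC) ≤ n := by
    have := Submodule.finrank_le (kA ⊔ kC)
    rwa [hfinfun] at this
  have hrnA : A.rank + Module.finrank ℝ kA = n := by
    have := LinearMap.finrank_range_add_finrank_ker A.mulVecLin
    rw [hfinfun] at this
    exact this
  have hrA_le : A.rank ≤ p := by
    simpa using A.rank_le_card_height
  have hrA : A.rank = p := by omega
  have hATrank : Aᵀ.rank = p := by rw [A.rank_transpose]; exact hrA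
  have hATrange : Module.finrank ℝ (LinearMap.range Aᵀ.mulVecLin) = p := hATrank
  -- injectivity of P and Aᵀ actions
  have hPinj : Function.Injective P.mulVecLin := by
    rw [Matrix.coe_mulVecLin]
    exact Matrix.mulVec_injective_iff_isUnit.2 hPunit
  have hATker : LinearMap.ker Aᵀ.mulVecLin = ⊥ := by
    have h := LinearMap.finrank_range_add_finrank_ker Aᵀ.mulVecLin
    rw [hATrange, Module.finrank_fintype_fun_eq_card, Fintype.card_fin] at h
    have h0 : Module.finrank ℝ (LinearMap.ker Aᵀ.mulVecLin) = 0 := by omega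
    exact Submodule.finrank_eq_zero.1 h0
  have hATinj : Function.Injective Aᵀ.mulVecLin := LinearMap.ker_eq_bot.1 hATker
  -- P maps ker C onto range Aᵀ
  have hmaple : Submodule.map P.mulVecLin kC ≤ LinearMap.range Aᵀ.mulVecLin := by
    rintro w ⟨v, hv, rfl⟩
    simp only [hkCdef, SetLike.mem_coe, LinearMap.mem_ker, Matrix.mulVecLin_apply] at hv
    refine ⟨Q *ᵥ (A *ᵥ v), ?_⟩
    rw [Matrix.mulVecLin_apply, Matrix.mulVecLin_apply, hP, Matrix.add_mulVec,
      ← Matrix.mulVec_mulVec, ← Matrix.mulVec_mulVec, ← Matrix.mulVec_mulVec,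
      ← Matrix.mulVec_mulVec, hv]
    simp
  have hmapfin : Module.finrank ℝ (Submodule.map P.mulVecLin kC) = p := by
    rw [← (kC.equivMapOfInjective _ hPinj).finrank_eq]
    exact hkC
  have hmapeq : Submodule.map P.mulVecLin kC = LinearMap.range Aᵀ.mulVecLin :=
    Submodule.eq_of_le_of_finrank_eq hmaple (by rw [hmapfin, hATrange])
  -- C * P⁻¹ * Aᵀ = 0
  have hCPA : C * P⁻¹ * Aᵀ = 0 := by
    ext i j
    have hmem : Aᵀ.mulVecLin (Pi.single j 1) ∈ LinearMap.range Aᵀ.mulVecLin :=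
      LinearMap.mem_range_self _ _
    rw [← hmapeq] at hmem
    obtain ⟨v, hv, hvw⟩ := hmem
    simp only [hkCdef, SetLike.mem_coe, LinearMap.mem_ker, Matrix.mulVecLin_apply] at hv
    rw [Matrix.mulVecLin_apply, Matrix.mulVecLin_apply] at hvw
    have hcol : (C * P⁻¹ * Aᵀ) *ᵥ Pi.single j 1 = 0 := by
      rw [← Matrix.mulVec_mulVec, ← hvw, Matrix.mulVec_mulVec, Matrix.mul_assoc, hPP',
        Matrix.mul_one, hv]
    have := congrFun hcol i
    simpa [Matrix.mulVec_single_one] using this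
  -- cancel Aᵀ
  have hcancel : ∀ M N : Matrix (Fin p) (Fin p) ℝ, Aᵀ * M = Aᵀ * N → M = N := by
    intro M N h
    ext i j
    have hc : Aᵀ.mulVecLin (M *ᵥ Pi.single j 1) = Aᵀ.mulVecLin (N *ᵥ Pi.single j 1) := by
      rw [Matrix.mulVecLin_apply, Matrix.mulVecLin_apply, Matrix.mulVec_mulVec,
        Matrix.mulVec_mulVec, h]
    have h2 := congrFun (hATinj hc) i
    simpa using h2
  have h2 : Cᵀ * R * C * (P⁻¹ * Aᵀ) = 0 := by
    simp only [Matrix.mul_assoc] at hCPA ⊢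
    rw [hCPA, Matrix.mul_zero, Matrix.mul_zero]
  have h1 : Aᵀ * Q * A * (P⁻¹ * Aᵀ) + Cᵀ * R * C * (P⁻¹ * Aᵀ) = Aᵀ := by
    rw [← Matrix.add_mul, ← hP, ← Matrix.mul_assoc, hPP, Matrix.one_mul]
  rw [h2, add_zero] at h1
  have hQX : Q * (A * P⁻¹ * Aᵀ) = 1 := by
    apply hcancel
    rw [Matrix.mul_one]
    simp only [Matrix.mul_assoc] at h1 ⊢
    exact h1
  exact (Matrix.inv_eq_right_inv hQX).symm
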